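/- Let A = (Q, M, I, F) be a weighted automaton over a unary alphabet and let q ∈ Q be a state such that: (i) there is a path of nonzero transitions of some length p from an initial state (a state q_0 with I(q_0) ≠ 0) to q; (ii) there is a path of nonzero transitions of some length s from q to a final state (a state q_f with F(q_f) ≠ 0); and (iii) there are two distinct closed walks of the same length L ≥ 1 of nonzero transitions from q to q. Then a_A(p + n·L + s) ≥ 2^n for all n ≥ 0; in particular A is not polynomially ambiguous. -/

import Mathlib

/-- The weighted automaton with states `Fin d`, transition matrix `M`, initial vector `I`
and final vector `F` recognizes the sequence `u`, i.e. `u n = Iᵀ · Mⁿ · F`. -/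
def Recognizes {d : ℕ} (M : Matrix (Fin d) (Fin d) ℚ) (I F : Fin d → ℚ) (u : ℕ → ℚ) : Prop :=
  ∀ n : ℕ, u n = dotProduct I ((M ^ n).mulVec F)

/-- `r` is an accepting run of length `n` of the weighted automaton `(Fin d, M, I, F)`. -/
def AcceptingRun {d : ℕ} (M : Matrix (Fin d) (Fin d) ℚ) (I F : Fin d → ℚ) (n : ℕ)
    (r : Fin (n + 1) → Fin d) : Prop :=
  I (r 0) ≠ 0 ∧ F (r (Fin.last n)) ≠ 0 ∧ ∀ i : Fin n, M (r i.castSucc) (r i.succ) ≠ 0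

/-- The ambiguity of a weighted automaton: the number of accepting runs of length `n`. -/
noncomputable def ambiguity {d : ℕ} (M : Matrix (Fin d) (Fin d) ℚ) (I F : Fin d → ℚ)
    (n : ℕ) : ℕ :=
  Nat.card {r : Fin (n + 1) → Fin d // AcceptingRun M I F n r}

/-- A weighted automaton is polynomially ambiguous if its ambiguity is bounded by a
polynomial in the input length. -/
def PolyAmbiguous {d : ℕ} (M : Matrix (Fin d) (Fin d) ℚ) (I F : Fin d → ℚ) : Prop :=
  ∃ P : Polynomial ℕ, ∀ n : ℕ, ambiguity M I F n ≤ P.eval n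

/-- A walk of nonzero transitions of length `n` in the transition matrix `M`. -/
def IsWalk {d : ℕ} (M : Matrix (Fin d) (Fin d) ℚ) (n : ℕ) (w : Fin (n + 1) → Fin d) : Prop :=
  ∀ i : Fin n, M (w i.castSucc) (w i.succ) ≠ 0


section Aux

/-- The run, as a function `ℕ → Fin d`. -/
def nrun {d : ℕ} (p s L : ℕ) (hL : 1 ≤ L) (w₁ : Fin (p+1) → Fin d) (w₂ : Fin (s+1) → Fin d)
    (c₁ c₂ : Fin (L+1) → Fin d) (n : ℕ) (b : ℕ → Bool) (k : ℕ) : Fin d :=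
  if h1 : k ≤ p then w₁ ⟨k, by omega⟩
  else if _h2 : k ≤ p + n*L then
    (bif b ((k - p - 1)/L) then c₁ else c₂)
      ⟨(k - p - 1) % L + 1, Nat.succ_lt_succ (Nat.mod_lt _ (by omega))⟩
  else w₂ ⟨min (k - p - n*L) s, Nat.lt_succ_of_le (Nat.min_le_right _ _)⟩

variable {d : ℕ} {p s L : ℕ} (hL : 1 ≤ L) (w₁ : Fin (p+1) → Fin d) (w₂ : Fin (s+1) → Fin d)
    (c₁ c₂ : Fin (L+1) → Fin d) (n : ℕ) (b : ℕ → Bool)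

lemma nrun_w1 (k : ℕ) (hk : k ≤ p) :
    nrun p s L hL w₁ w₂ c₁ c₂ n b k = w₁ ⟨k, by omega⟩ := by
  simp only [nrun]; rw [dif_pos hk]

lemma nrun_loop (i t : ℕ) (hi : i < n) (ht1 : 1 ≤ t) (ht2 : t ≤ L) :
    nrun p s L hL w₁ w₂ c₁ c₂ n b (p + i*L + t)
      = (bif b i then c₁ else c₂) ⟨t, by omega⟩ := by
  have h1 : ¬ (p + i*L + t ≤ p) := by omega
  have hmul : (i+1)*L = i*L + L := by ring
  have hin : (i+1)*L ≤ n*L := Nat.mul_le_mul_right L hi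
  have h2 : p + i*L + t ≤ p + n*L := by omega
  have hj : p + i*L + t - p - 1 = (t-1) + L*i := by
    have : i*L = L*i := by ring
    omega
  have hdiv : ((t-1) + L*i)/L = i := by
    rw [Nat.add_mul_div_left _ _ (by omega : 0 < L), Nat.div_eq_of_lt (by omega)]; omega
  have hmod : ((t-1) + L*i) % L = t - 1 := by
    rw [Nat.add_mul_mod_self_left, Nat.mod_eq_of_lt (by omega)]
  have ht : t - 1 + 1 = t := by omega
  simp only [nrun]
  rw [dif_neg h1, dif_pos h2]
  simp only [hj, hdiv, hmod, ht]

lemma nrun_q {q : Fin d} (hw₁q : w₁ (Fin.last p) = q)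
    (hc₁L : c₁ (Fin.last L) = q) (hc₂L : c₂ (Fin.last L) = q)
    (i : ℕ) (hi : i ≤ n) :
    nrun p s L hL w₁ w₂ c₁ c₂ n b (p + i*L) = q := by
  cases i with
  | zero =>
    rw [show p + 0*L = p by ring, nrun_w1 hL w₁ w₂ c₁ c₂ n b p le_rfl]
    rw [← hw₁q]; congr 1
  | succ m =>
    rw [show p + (m+1)*L = p + m*L + L by ring,
      nrun_loop hL w₁ w₂ c₁ c₂ n b m L (by omega) hL le_rfl]
    have : (⟨L, by omega⟩ : Fin (L+1)) = Fin.last L := rfl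
    rw [this]
    cases b m <;> simp [hc₁L, hc₂L]

lemma nrun_w2 (t : ℕ) (ht1 : 1 ≤ t) (ht2 : t ≤ s) :
    nrun p s L hL w₁ w₂ c₁ c₂ n b (p + n*L + t) = w₂ ⟨t, by omega⟩ := by
  have h1 : ¬ (p + n*L + t ≤ p) := by omega
  have h2 : ¬ (p + n*L + t ≤ p + n*L) := by omega
  have h3 : p + n*L + t - p - n*L = t := by omega
  simp only [nrun]
  rw [dif_neg h1, dif_neg h2]
  simp only [h3, Nat.min_eq_left ht2]

end Aux

section Aux2
variable {d : ℕ} {M : Matrix (Fin d) (Fin d) ℚ} {I F : Fin d → ℚ} {q : Fin d} {p s L : ℕ}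
  (hL : 1 ≤ L) (w₁ : Fin (p+1) → Fin d) (w₂ : Fin (s+1) → Fin d)
  (c₁ c₂ : Fin (L+1) → Fin d) (n : ℕ) (b : ℕ → Bool)

lemma nrun_step (hw₁ : IsWalk M p w₁) (hw₁q : w₁ (Fin.last p) = q)
    (hw₂ : IsWalk M s w₂) (hw₂q : w₂ 0 = q)
    (hc₁ : IsWalk M L c₁) (hc₂ : IsWalk M L c₂)
    (hc₁0 : c₁ 0 = q) (hc₁L : c₁ (Fin.last L) = q)
    (hc₂0 : c₂ 0 = q) (hc₂L : c₂ (Fin.last L) = q)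
    (k : ℕ) (hk : k < p + n*L + s) :
    M (nrun p s L hL w₁ w₂ c₁ c₂ n b k) (nrun p s L hL w₁ w₂ c₁ c₂ n b (k+1)) ≠ 0 := by
  rcases lt_or_ge k p with hkp | hkp
  · -- inside w₁
    rw [nrun_w1 hL w₁ w₂ c₁ c₂ n b k (by omega), nrun_w1 hL w₁ w₂ c₁ c₂ n b (k+1) (by omega)]
    have := hw₁ ⟨k, hkp⟩
    simpa only [Fin.castSucc_mk, Fin.succ_mk] using this
  rcases lt_or_ge k (p + n*L) with hkl | hkl
  · -- inside the loops
    have hLpos : 0 < L := by omega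
    obtain ⟨i, t0, ht0, hk', hi⟩ : ∃ i t0, t0 < L ∧ k = p + i*L + t0 ∧ i < n := by
      refine ⟨(k-p)/L, (k-p)%L, Nat.mod_lt _ hLpos, ?_, ?_⟩
      · have hdm := Nat.div_add_mod (k - p) L
        have hcomm : L * ((k-p)/L) = ((k-p)/L) * L := by ring
        omega
      · exact (Nat.div_lt_iff_lt_mul hLpos).2 (by omega)
    subst hk'
    rw [show p + i*L + t0 + 1 = p + i*L + (t0+1) from rfl,
      nrun_loop hL w₁ w₂ c₁ c₂ n b i (t0+1) hi (by omega) (by omega)]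
    rcases Nat.eq_zero_or_pos t0 with h0 | h0
    · subst h0
      rw [show p + i*L + 0 = p + i*L from rfl,
        nrun_q hL w₁ w₂ c₁ c₂ n b hw₁q hc₁L hc₂L i (by omega)]
      cases hb : b i <;> simp only [cond_false, cond_true]
      · have := hc₂ ⟨0, hLpos⟩
        simp only [Fin.castSucc_mk, Fin.succ_mk] at this
        rwa [show (⟨0, by omega⟩ : Fin (L+1)) = 0 from rfl, hc₂0] at this
      · have := hc₁ ⟨0, hLpos⟩
        simp only [Fin.castSucc_mk, Fin.succ_mk] at this
        rwa [show (⟨0, by omega⟩ : Fin (L+1)) = 0 from rfl, hc₁0] at this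
    · rw [nrun_loop hL w₁ w₂ c₁ c₂ n b i t0 hi h0 (by omega)]
      cases hb : b i <;> simp only [cond_false, cond_true]
      · have := hc₂ ⟨t0, ht0⟩
        simpa only [Fin.castSucc_mk, Fin.succ_mk] using this
      · have := hc₁ ⟨t0, ht0⟩
        simpa only [Fin.castSucc_mk, Fin.succ_mk] using this
  · -- inside w₂
    obtain ⟨t, hts, hk'⟩ : ∃ t, t < s ∧ k = p + n*L + t := ⟨k - (p+n*L), by omega, by omega⟩
    subst hk'
    rw [show p + n*L + t + 1 = p + n*L + (t+1) from rfl, nrun_w2 hL w₁ w₂ c₁ c₂ n b (t+1) (by omega) (by omega)]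
    have htrans := hw₂ ⟨t, hts⟩
    simp only [Fin.castSucc_mk, Fin.succ_mk] at htrans
    rcases Nat.eq_zero_or_pos t with h0 | h0
    · subst h0
      rw [show p + n*L + 0 = p + n*L from rfl,
        nrun_q hL w₁ w₂ c₁ c₂ n b hw₁q hc₁L hc₂L n le_rfl]
      rwa [show (⟨0, by omega⟩ : Fin (s+1)) = 0 from rfl, hw₂q] at htrans
    · rw [nrun_w2 hL w₁ w₂ c₁ c₂ n b t h0 (by omega)]
      exact htrans

lemma nrun_accepting (hw₁ : IsWalk M p w₁) (hI : I (w₁ 0) ≠ 0) (hw₁q : w₁ (Fin.last p) = q)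
    (hw₂ : IsWalk M s w₂) (hw₂q : w₂ 0 = q) (hF : F (w₂ (Fin.last s)) ≠ 0)
    (hc₁ : IsWalk M L c₁) (hc₂ : IsWalk M L c₂)
    (hc₁0 : c₁ 0 = q) (hc₁L : c₁ (Fin.last L) = q)
    (hc₂0 : c₂ 0 = q) (hc₂L : c₂ (Fin.last L) = q) :
    AcceptingRun M I F (p + n*L + s)
      (fun i : Fin (p + n*L + s + 1) => nrun p s L hL w₁ w₂ c₁ c₂ n b i.val) := by
  refine ⟨?_, ?_, ?_⟩
  · show I (nrun p s L hL w₁ w₂ c₁ c₂ n b ((0 : Fin (p + n*L + s + 1)).val)) ≠ 0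
    rw [Fin.val_zero, nrun_w1 hL w₁ w₂ c₁ c₂ n b 0 (by omega)]
    rwa [show (⟨0, by omega⟩ : Fin (p+1)) = 0 from rfl]
  · show F (nrun p s L hL w₁ w₂ c₁ c₂ n b ((Fin.last (p + n*L + s)).val)) ≠ 0
    rw [Fin.val_last]
    rcases Nat.eq_zero_or_pos s with h0 | h0
    · subst h0
      rw [show p + n*L + 0 = p + n*L from rfl,
        nrun_q hL w₁ w₂ c₁ c₂ n b hw₁q hc₁L hc₂L n le_rfl]
      rwa [show Fin.last 0 = 0 from rfl, hw₂q] at hF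
    · rw [show p + n*L + s = p + n*L + s from rfl,
        nrun_w2 hL w₁ w₂ c₁ c₂ n b s h0 le_rfl]
      exact hF
  · intro i
    have h1 : (i.castSucc : ℕ) = (i : ℕ) := rfl
    have h2 : (i.succ : ℕ) = (i : ℕ) + 1 := rfl
    show M (nrun p s L hL w₁ w₂ c₁ c₂ n b (i.castSucc : ℕ))
      (nrun p s L hL w₁ w₂ c₁ c₂ n b (i.succ : ℕ)) ≠ 0
    rw [h1, h2]
    exact nrun_step hL w₁ w₂ c₁ c₂ n b hw₁ hw₁q hw₂ hw₂q hc₁ hc₂ hc₁0 hc₁L hc₂0 hc₂L i i.isLt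

end Aux2

section Aux3
variable {d : ℕ} {M : Matrix (Fin d) (Fin d) ℚ} {I F : Fin d → ℚ} {q : Fin d} {p s L : ℕ}
  (hL : 1 ≤ L) (w₁ : Fin (p+1) → Fin d) (w₂ : Fin (s+1) → Fin d)
  (c₁ c₂ : Fin (L+1) → Fin d) (n : ℕ)

lemma nrun_inj (j : Fin (L+1)) (hj : c₁ j ≠ c₂ j) (b b' : ℕ → Bool) (i : ℕ) (hi : i < n)
    (hj1 : 1 ≤ (j : ℕ)) (hj2 : (j : ℕ) ≤ L)
    (heq : nrun p s L hL w₁ w₂ c₁ c₂ n b (p + i*L + (j : ℕ))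
      = nrun p s L hL w₁ w₂ c₁ c₂ n b' (p + i*L + (j : ℕ))) :
    b i = b' i := by
  rw [nrun_loop hL w₁ w₂ c₁ c₂ n b i (j : ℕ) hi hj1 hj2,
    nrun_loop hL w₁ w₂ c₁ c₂ n b' i (j : ℕ) hi hj1 hj2] at heq
  simp only [Fin.eta] at heq
  cases hb : b i <;> cases hb' : b' i <;> rw [hb, hb'] at heq <;>
    simp only [cond_true, cond_false] at heq
  all_goals first | rfl | exact absurd heq hj | exact absurd heq.symm hj

end Aux3

lemma exists_two_pow_gt (c D : ℕ) : ∃ n : ℕ, 0 < n ∧ c * n ^ D < 2 ^ n := by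
  have h := isLittleO_pow_const_const_pow_of_one_lt (R := ℝ) D (by norm_num : (1:ℝ) < 2)
  have h2 := h.def (by positivity : (0:ℝ) < 1/((c:ℝ)+1))
  rw [Filter.eventually_atTop] at h2
  obtain ⟨N, hN⟩ := h2
  refine ⟨max N 1, lt_of_lt_of_le one_pos (le_max_right _ _), ?_⟩
  set n := max N 1 with hn
  have hn1 : 1 ≤ n := le_max_right _ _
  have hb := hN n (le_max_left _ _)
  rw [Real.norm_eq_abs, Real.norm_eq_abs, abs_of_nonneg (by positivity),
    abs_of_nonneg (by positivity)] at hb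
  have hnpos : (0:ℝ) < (n:ℝ) := by exact_mod_cast hn1
  have hpow : (0:ℝ) < (n:ℝ) ^ D := pow_pos hnpos D
  have h3 : ((c:ℝ)+1) * ((n:ℝ)^D) ≤ ((c:ℝ)+1) * (1/((c:ℝ)+1) * 2^n) :=
    mul_le_mul_of_nonneg_left hb (by positivity)
  have h4 : ((c:ℝ)+1) * (1/((c:ℝ)+1) * 2^n) = 2^n := by field_simp
  have h5 : (c:ℝ) * (n:ℝ)^D < 2^n :=
    lt_of_lt_of_le (mul_lt_mul_of_pos_right (by linarith) hpow) (le_trans h3 (le_of_eq h4))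
  exact_mod_cast h5

lemma eval_bound (P : Polynomial ℕ) (m : ℕ) :
    P.eval m ≤ (∑ i ∈ Finset.range (P.natDegree+1), P.coeff i) * (m+1)^P.natDegree := by
  conv_lhs => rw [Polynomial.eval_eq_sum_range]
  rw [Finset.sum_mul]
  apply Finset.sum_le_sum
  intro i hi
  exact Nat.mul_le_mul_left _ (le_trans (Nat.pow_le_pow_left (Nat.le_succ m) i)
    (Nat.pow_le_pow_right (by omega) (Nat.lt_succ_iff.1 (Finset.mem_range.1 hi))))

/-- If a state `q` of a weighted automaton is reachable from an initial state
by a walk of length `p` of nonzero transitions, can reach a final state by a walk of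
length `s`, and carries two distinct closed walks of the same length `L ≥ 1`, then
`a_A(p + n·L + s) ≥ 2^n` for all `n`; in particular `A` is not polynomially ambiguous. -/
theorem two_loops_exponential_ambiguity (d : ℕ) (M : Matrix (Fin d) (Fin d) ℚ)
    (I F : Fin d → ℚ) (q : Fin d) (p s L : ℕ) (hL : 1 ≤ L)
    (w₁ : Fin (p + 1) → Fin d) (hw₁ : IsWalk M p w₁)
    (hI : I (w₁ 0) ≠ 0) (hw₁q : w₁ (Fin.last p) = q)
    (w₂ : Fin (s + 1) → Fin d) (hw₂ : IsWalk M s w₂)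
    (hw₂q : w₂ 0 = q) (hF : F (w₂ (Fin.last s)) ≠ 0)
    (c₁ c₂ : Fin (L + 1) → Fin d) (hc₁ : IsWalk M L c₁) (hc₂ : IsWalk M L c₂)
    (hc₁0 : c₁ 0 = q) (hc₁L : c₁ (Fin.last L) = q)
    (hc₂0 : c₂ 0 = q) (hc₂L : c₂ (Fin.last L) = q)
    (hne : c₁ ≠ c₂) :
    (∀ n : ℕ, 2 ^ n ≤ ambiguity M I F (p + n * L + s)) ∧ ¬ PolyAmbiguous M I F := by
  -- the position where the two cycles differ
  obtain ⟨j, hj⟩ := Function.ne_iff.1 hne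
  have hj0 : (j : ℕ) ≠ 0 := by
    intro h
    exact hj (by rw [show j = 0 from Fin.ext h, hc₁0, hc₂0])
  have hjL : (j : ℕ) ≠ L := by
    intro h
    exact hj (by rw [show j = Fin.last L from Fin.ext h, hc₁L, hc₂L])
  have hjlt : (j : ℕ) < L + 1 := j.isLt
  have hjone : 1 ≤ (j : ℕ) := by omega
  have hjle : (j : ℕ) ≤ L := by omega
  have main : ∀ n : ℕ, 2 ^ n ≤ ambiguity M I F (p + n * L + s) := by
    intro n
    have hcard : 2 ^ n = Nat.card (Fin n → Bool) := by simp [Nat.card_eq_fintype_card]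
    rw [ambiguity, hcard]
    have hinj : Function.Injective (fun (b : Fin n → Bool) (i : Fin (p + n*L + s + 1)) =>
        nrun p s L hL w₁ w₂ c₁ c₂ n (fun m => if h : m < n then b ⟨m, h⟩ else false) i.val) := by
      intro b b' e
      funext i
      have hiL : ((i : ℕ)+1)*L ≤ n*L := Nat.mul_le_mul_right L i.isLt
      have hmul : ((i : ℕ)+1)*L = (i : ℕ)*L + L := by ring
      have hkle : p + (i : ℕ)*L + (j : ℕ) < p + n*L + s + 1 := by omega
      have heq := congrFun e ⟨p + (i : ℕ)*L + (j : ℕ), hkle⟩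
      have hres := nrun_inj hL w₁ w₂ c₁ c₂ n j hj
        (fun m => if h : m < n then b ⟨m, h⟩ else false)
        (fun m => if h : m < n then b' ⟨m, h⟩ else false)
        (i : ℕ) i.isLt hjone hjle heq
      simpa only [dif_pos i.isLt, Fin.eta] using hres
    exact Nat.card_le_card_of_injective
      (fun b : Fin n → Bool =>
        (⟨fun i => nrun p s L hL w₁ w₂ c₁ c₂ n
            (fun m => if h : m < n then b ⟨m, h⟩ else false) i.val,
          nrun_accepting hL w₁ w₂ c₁ c₂ n (fun m => if h : m < n then b ⟨m, h⟩ else false)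
            hw₁ hI hw₁q hw₂ hw₂q hF hc₁ hc₂ hc₁0 hc₁L hc₂0 hc₂L⟩ :
          {r : Fin (p + n*L + s + 1) → Fin d // AcceptingRun M I F (p + n*L + s) r}))
      (fun a a' e => hinj (congrArg Subtype.val e))
  refine ⟨main, ?_⟩
  rintro ⟨P, hP⟩
  set D := P.natDegree with hD
  set C := ∑ i ∈ Finset.range (P.natDegree+1), P.coeff i with hC
  set A := p + L + s + 1 with hA
  obtain ⟨n, hn0, hn⟩ := exists_two_pow_gt (C * A^D) D
  have hm : p + n*L + s + 1 ≤ A*n := by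
    have h1 : (p+s+1)*1 ≤ (p+s+1)*n := Nat.mul_le_mul_left _ hn0
    have h2 : n*L = L*n := by ring
    have h3 : A*n = (p+s+1)*n + L*n := by rw [hA]; ring
    omega
  have hchain : 2 ^ n ≤ (C * A^D) * n^D := by
    calc 2 ^ n ≤ ambiguity M I F (p + n*L + s) := main n
      _ ≤ P.eval (p + n*L + s) := hP _
      _ ≤ C * (p + n*L + s + 1)^D := eval_bound P _
      _ ≤ C * (A^D * n^D) := by
          refine Nat.mul_le_mul_left _ ?_
          rw [← mul_pow]
          exact Nat.pow_le_pow_left hm D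
      _ = (C * A^D) * n^D := by ring
  omega
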